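/- Let γ_{ch} = σ(η) γ^0 γ^1 γ^2 γ^3 with σ(η) = (−i)^{(q−p)(q−p+1)/2}, and assume γ_{ch}² = 1_k. Let 𝖪_μ, 𝖠_μ ∈ M_m(ℂ), define 𝔡_μ = {𝖪_μ + 𝖠_μ, ·}_{e_μ} on M_m(ℂ), 𝔉_{μν} = [𝔡_μ, 𝔡_ν], θ = Σ_{μ,ν} η^{μν} 𝔡_μ ∘ 𝔡_ν, let Φ be any linear operator on M_m(ℂ), and set D_ω = Σ_μ γ^μ ⊗ 𝔡_μ + γ_{ch} ⊗ Φ on ℂ^k ⊗ M_m(ℂ). Then D_ω² = (1/2) Σ_{μ,ν} γ^μ γ^ν ⊗ 𝔉_{μν} + 1_k ⊗ (θ + Φ∘Φ) + Σ_μ γ^μ γ_{ch} ⊗ [𝔡_μ, Φ]. (Paper: Corollary 6.2, the flat Weitzenböck formula with Higgs term.) -/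

import Mathlib

open Matrix
noncomputable section
def matOp {k : ℕ} {V : Type*} [AddCommGroup V] [Module ℂ V]
    (g : Matrix (Fin k) (Fin k) ℂ) (T : Module.End ℂ V) :
    Module.End ℂ (Fin k → V) where
  toFun f i := ∑ j, g i j • T (f j)
  map_add' f h := by
    funext i
    simp [map_add, smul_add, Finset.sum_add_distrib]
  map_smul' c f := by
    funext i
    simp only [Pi.smul_apply, _root_.map_smul, RingHom.id_apply]
    rw [Finset.smul_sum]
    exact Finset.sum_congr rfl fun j _ => smul_comm _ _ _

section helpers
variable {k : ℕ} {V : Type*} [AddCommGroup V] [Module ℂ V]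

lemma matOp_apply (g : Matrix (Fin k) (Fin k) ℂ) (T : Module.End ℂ V)
    (f : Fin k → V) (i : Fin k) : matOp g T f i = ∑ j, g i j • T (f j) := rfl

lemma matOp_mul (g h : Matrix (Fin k) (Fin k) ℂ) (T S : Module.End ℂ V) :
    matOp g T * matOp h S = matOp (g * h) (T * S) := by
  apply LinearMap.ext; intro f; funext i
  simp only [Module.End.mul_apply, matOp_apply]
  calc ∑ j, g i j • T (∑ l, h j l • S (f l))
      = ∑ j, ∑ l, (g i j * h j l) • T (S (f l)) := by
        refine Finset.sum_congr rfl fun j _ => ?_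
        rw [map_sum, Finset.smul_sum]
        exact Finset.sum_congr rfl fun l _ => by rw [_root_.map_smul, smul_smul]
    _ = ∑ l, ∑ j, (g i j * h j l) • T (S (f l)) := Finset.sum_comm
    _ = ∑ l, (g * h) i l • T (S (f l)) := by
        refine Finset.sum_congr rfl fun l _ => ?_
        rw [Matrix.mul_apply, Finset.sum_smul]

lemma matOp_add_left (g g' : Matrix (Fin k) (Fin k) ℂ) (T : Module.End ℂ V) :
    matOp (g + g') T = matOp g T + matOp g' T := by
  apply LinearMap.ext; intro f; funext i
  simp [matOp_apply, add_smul, Finset.sum_add_distrib]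

lemma matOp_add_right (g : Matrix (Fin k) (Fin k) ℂ) (T S : Module.End ℂ V) :
    matOp g (T + S) = matOp g T + matOp g S := by
  apply LinearMap.ext; intro f; funext i
  simp [matOp_apply, smul_add, Finset.sum_add_distrib]

lemma matOp_neg_left (g : Matrix (Fin k) (Fin k) ℂ) (T : Module.End ℂ V) :
    matOp (-g) T = -(matOp g T) := by
  apply LinearMap.ext; intro f; funext i
  simp [matOp_apply, neg_smul, Finset.sum_neg_distrib]

lemma matOp_neg_right (g : Matrix (Fin k) (Fin k) ℂ) (T : Module.End ℂ V) :
    matOp g (-T) = -(matOp g T) := by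
  apply LinearMap.ext; intro f; funext i
  simp [matOp_apply, smul_neg, Finset.sum_neg_distrib]

lemma matOp_sub_right (g : Matrix (Fin k) (Fin k) ℂ) (T S : Module.End ℂ V) :
    matOp g (T - S) = matOp g T - matOp g S := by
  rw [sub_eq_add_neg, matOp_add_right, matOp_neg_right, sub_eq_add_neg]

lemma matOp_smul_left (c : ℂ) (g : Matrix (Fin k) (Fin k) ℂ) (T : Module.End ℂ V) :
    matOp (c • g) T = c • matOp g T := by
  apply LinearMap.ext; intro f; funext i
  simp [matOp_apply, Matrix.smul_apply, smul_smul, Finset.smul_sum]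

lemma matOp_smul_right (c : ℂ) (g : Matrix (Fin k) (Fin k) ℂ) (T : Module.End ℂ V) :
    matOp g (c • T) = c • matOp g T := by
  apply LinearMap.ext; intro f; funext i
  simp only [matOp_apply, LinearMap.smul_apply, Pi.smul_apply]
  rw [Finset.smul_sum]
  exact Finset.sum_congr rfl fun j _ => smul_comm _ _ _

lemma matOp_sum_right {ι : Type*} (s : Finset ι) (g : Matrix (Fin k) (Fin k) ℂ)
    (T : ι → Module.End ℂ V) :
    matOp g (∑ i ∈ s, T i) = ∑ i ∈ s, matOp g (T i) := by
  classical
  induction s using Finset.induction_on with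
  | empty =>
    simp only [Finset.sum_empty]
    apply LinearMap.ext; intro f; funext i
    simp [matOp_apply]
  | insert _ _ hx ih =>
    rw [Finset.sum_insert hx, Finset.sum_insert hx, matOp_add_right, ih]

end helpers

def brkt {m : ℕ} (M : Matrix (Fin m) (Fin m) ℂ) (e : ℂ) :
    Module.End ℂ (Matrix (Fin m) (Fin m) ℂ) :=
  LinearMap.mulLeft ℂ M + e • LinearMap.mulRight ℂ M

theorem stmt15 (p q k m : ℕ) (hpq : p + q = 4) (hk : 1 ≤ k) (hm : 1 ≤ m)
    (e : Fin 4 → ℂ) (he : ∀ μ, e μ = if (μ : ℕ) < p then 1 else -1)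
    (γ : Fin 4 → Matrix (Fin k) (Fin k) ℂ)
    (hCl : ∀ μ ν, γ μ * γ ν + γ ν * γ μ =
      (2 * if μ = ν then e μ else 0) • (1 : Matrix (Fin k) (Fin k) ℂ))
    (hAdj : ∀ μ, (γ μ)ᴴ = e μ • γ μ)
    (γch : Matrix (Fin k) (Fin k) ℂ)
    (hγch : γch =
      ((-Complex.I) ^ ((((q : ℤ) - (p : ℤ)) * ((q : ℤ) - (p : ℤ) + 1)) / 2)) •
        (γ 0 * γ 1 * γ 2 * γ 3))
    (hγch2 : γch * γch = 1)
    (K A : Fin 4 → Matrix (Fin m) (Fin m) ℂ)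
    (dop : Fin 4 → Module.End ℂ (Matrix (Fin m) (Fin m) ℂ))
    (hdop : ∀ μ, dop μ = brkt (K μ + A μ) (e μ))
    (F : Fin 4 → Fin 4 → Module.End ℂ (Matrix (Fin m) (Fin m) ℂ))
    (hF : ∀ μ ν, F μ ν = dop μ * dop ν - dop ν * dop μ)
    (θ : Module.End ℂ (Matrix (Fin m) (Fin m) ℂ))
    (hθ : θ = ∑ μ, ∑ ν, (if μ = ν then e μ else 0) • (dop μ * dop ν))
    (Φ : Module.End ℂ (Matrix (Fin m) (Fin m) ℂ))
    (Dω : Module.End ℂ (Fin k → Matrix (Fin m) (Fin m) ℂ))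
    (hDω : Dω = (∑ μ, matOp (γ μ) (dop μ)) + matOp γch Φ) :
    Dω * Dω =
      (1 / 2 : ℂ) • (∑ μ, ∑ ν, matOp (γ μ * γ ν) (F μ ν))
        + matOp 1 (θ + Φ * Φ)
        + ∑ μ, matOp (γ μ * γch) (dop μ * Φ - Φ * dop μ) := by
  classical
  have hanti : ∀ μ ν : Fin 4, μ ≠ ν → γ μ * γ ν = -(γ ν * γ μ) := by
    intro μ ν h
    have h2 := hCl μ ν
    rw [if_neg h, mul_zero, zero_smul] at h2
    exact eq_neg_of_add_eq_zero_left h2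
  have base : ∀ μ, (γ 0 * γ 1 * γ 2 * γ 3) * γ μ = -(γ μ * (γ 0 * γ 1 * γ 2 * γ 3)) := by
    intro μ
    fin_cases μ
    · calc (γ 0 * γ 1 * γ 2 * γ 3) * γ 0
          = γ 0 * γ 1 * γ 2 * (γ 3 * γ 0) := by noncomm_ring
        _ = γ 0 * γ 1 * γ 2 * (-(γ 0 * γ 3)) := by rw [hanti 3 0 (by decide)]
        _ = -(γ 0 * γ 1 * (γ 2 * γ 0) * γ 3) := by noncomm_ring
        _ = -(γ 0 * γ 1 * (-(γ 0 * γ 2)) * γ 3) := by rw [hanti 2 0 (by decide)]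
        _ = γ 0 * (γ 1 * γ 0) * γ 2 * γ 3 := by noncomm_ring
        _ = γ 0 * (-(γ 0 * γ 1)) * γ 2 * γ 3 := by rw [hanti 1 0 (by decide)]
        _ = -(γ 0 * (γ 0 * γ 1 * γ 2 * γ 3)) := by noncomm_ring
    · calc (γ 0 * γ 1 * γ 2 * γ 3) * γ 1
          = γ 0 * γ 1 * γ 2 * (γ 3 * γ 1) := by noncomm_ring
        _ = γ 0 * γ 1 * γ 2 * (-(γ 1 * γ 3)) := by rw [hanti 3 1 (by decide)]
        _ = -(γ 0 * γ 1 * (γ 2 * γ 1) * γ 3) := by noncomm_ring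
        _ = -(γ 0 * γ 1 * (-(γ 1 * γ 2)) * γ 3) := by rw [hanti 2 1 (by decide)]
        _ = -(-(γ 0 * γ 1) * (γ 1 * (γ 2 * γ 3))) := by noncomm_ring
        _ = -((γ 1 * γ 0) * (γ 1 * (γ 2 * γ 3))) := by rw [← hanti 1 0 (by decide)]
        _ = -(γ 1 * (γ 0 * γ 1 * γ 2 * γ 3)) := by noncomm_ring
    · calc (γ 0 * γ 1 * γ 2 * γ 3) * γ 2
          = γ 0 * γ 1 * γ 2 * (γ 3 * γ 2) := by noncomm_ring
        _ = γ 0 * γ 1 * γ 2 * (-(γ 2 * γ 3)) := by rw [hanti 3 2 (by decide)]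
        _ = γ 0 * (-(γ 1 * γ 2)) * (γ 2 * γ 3) := by noncomm_ring
        _ = γ 0 * (γ 2 * γ 1) * (γ 2 * γ 3) := by rw [← hanti 2 1 (by decide)]
        _ = -(-(γ 0 * γ 2) * (γ 1 * (γ 2 * γ 3))) := by noncomm_ring
        _ = -((γ 2 * γ 0) * (γ 1 * (γ 2 * γ 3))) := by rw [← hanti 2 0 (by decide)]
        _ = -(γ 2 * (γ 0 * γ 1 * γ 2 * γ 3)) := by noncomm_ring
    · calc (γ 0 * γ 1 * γ 2 * γ 3) * γ 3
          = (γ 0 * γ 1) * ((γ 2 * γ 3) * γ 3) := by noncomm_ring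
        _ = -((γ 0 * γ 1) * ((-(γ 2 * γ 3)) * γ 3)) := by noncomm_ring
        _ = -((γ 0 * γ 1) * ((γ 3 * γ 2) * γ 3)) := by rw [← hanti 3 2 (by decide)]
        _ = γ 0 * (-(γ 1 * γ 3)) * (γ 2 * γ 3) := by noncomm_ring
        _ = γ 0 * (γ 3 * γ 1) * (γ 2 * γ 3) := by rw [← hanti 3 1 (by decide)]
        _ = -(-(γ 0 * γ 3) * (γ 1 * (γ 2 * γ 3))) := by noncomm_ring
        _ = -((γ 3 * γ 0) * (γ 1 * (γ 2 * γ 3))) := by rw [← hanti 3 0 (by decide)]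
        _ = -(γ 3 * (γ 0 * γ 1 * γ 2 * γ 3)) := by noncomm_ring
  have key : ∀ μ, γch * γ μ = -(γ μ * γch) := by
    intro μ
    rw [hγch, Matrix.smul_mul, base μ, smul_neg, ← Matrix.mul_smul]
  have hGG : (∑ μ, matOp (γ μ) (dop μ)) * (∑ ν, matOp (γ ν) (dop ν))
      = ∑ μ, ∑ ν, matOp (γ μ * γ ν) (dop μ * dop ν) := by
    rw [Finset.sum_mul]
    refine Finset.sum_congr rfl fun μ _ => ?_
    rw [Finset.mul_sum]
    exact Finset.sum_congr rfl fun ν _ => matOp_mul _ _ _ _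
  have hGC : (∑ μ, matOp (γ μ) (dop μ)) * matOp γch Φ
      = ∑ μ, matOp (γ μ * γch) (dop μ * Φ) := by
    rw [Finset.sum_mul]
    exact Finset.sum_congr rfl fun μ _ => matOp_mul _ _ _ _
  have hCG : matOp γch Φ * (∑ μ, matOp (γ μ) (dop μ))
      = ∑ μ, -(matOp (γ μ * γch) (Φ * dop μ)) := by
    rw [Finset.mul_sum]
    refine Finset.sum_congr rfl fun μ _ => ?_
    rw [matOp_mul, key μ, matOp_neg_left]
  have hCC : matOp γch Φ * matOp γch Φ = matOp (1 : Matrix (Fin k) (Fin k) ℂ) (Φ * Φ) := by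
    rw [matOp_mul, hγch2]
  have hθ' : matOp (1 : Matrix (Fin k) (Fin k) ℂ) θ
      = ∑ μ, ∑ ν, (if μ = ν then e μ else 0) •
          matOp (1 : Matrix (Fin k) (Fin k) ℂ) (dop μ * dop ν) := by
    rw [hθ, matOp_sum_right]
    refine Finset.sum_congr rfl fun μ _ => ?_
    rw [matOp_sum_right]
    exact Finset.sum_congr rfl fun ν _ => matOp_smul_right _ _ _
  have hpair : (∑ μ, ∑ ν, (matOp (γ μ * γ ν) (dop μ * dop ν)
        + matOp (γ μ * γ ν) (dop ν * dop μ)))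
      = ∑ μ, ∑ ν, (2 * if μ = ν then e μ else 0) •
          matOp (1 : Matrix (Fin k) (Fin k) ℂ) (dop μ * dop ν) := by
    calc (∑ μ, ∑ ν, (matOp (γ μ * γ ν) (dop μ * dop ν)
            + matOp (γ μ * γ ν) (dop ν * dop μ)))
        = (∑ μ, ∑ ν, matOp (γ μ * γ ν) (dop μ * dop ν))
            + ∑ μ, ∑ ν, matOp (γ μ * γ ν) (dop ν * dop μ) := by
          simp [Finset.sum_add_distrib]
      _ = (∑ μ, ∑ ν, matOp (γ μ * γ ν) (dop μ * dop ν))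
            + ∑ μ, ∑ ν, matOp (γ ν * γ μ) (dop μ * dop ν) := by
          have := Finset.sum_comm (s := (Finset.univ : Finset (Fin 4)))
            (t := (Finset.univ : Finset (Fin 4)))
            (f := fun μ ν => matOp (γ μ * γ ν) (dop ν * dop μ))
          rw [this]
      _ = ∑ μ, ∑ ν, (matOp (γ μ * γ ν) (dop μ * dop ν)
            + matOp (γ ν * γ μ) (dop μ * dop ν)) := by
          simp [Finset.sum_add_distrib]
      _ = ∑ μ, ∑ ν, (2 * if μ = ν then e μ else 0) •
            matOp (1 : Matrix (Fin k) (Fin k) ℂ) (dop μ * dop ν) := by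
          refine Finset.sum_congr rfl fun μ _ => Finset.sum_congr rfl fun ν _ => ?_
          rw [← matOp_add_left, hCl μ ν, matOp_smul_left]
  have hmain : ∑ μ, ∑ ν, matOp (γ μ * γ ν) (dop μ * dop ν)
      = (1/2 : ℂ) • (∑ μ, ∑ ν, matOp (γ μ * γ ν) (F μ ν))
        + matOp (1 : Matrix (Fin k) (Fin k) ℂ) θ := by
    have hsplit : ∀ μ ν : Fin 4, matOp (γ μ * γ ν) (dop μ * dop ν)
        = (1/2 : ℂ) • matOp (γ μ * γ ν) (F μ ν)
          + (1/2 : ℂ) • (matOp (γ μ * γ ν) (dop μ * dop ν)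
              + matOp (γ μ * γ ν) (dop ν * dop μ)) := by
      intro μ ν
      rw [hF, matOp_sub_right]
      module
    calc ∑ μ, ∑ ν, matOp (γ μ * γ ν) (dop μ * dop ν)
        = (1/2 : ℂ) • (∑ μ, ∑ ν, matOp (γ μ * γ ν) (F μ ν))
          + (1/2 : ℂ) • (∑ μ, ∑ ν, (matOp (γ μ * γ ν) (dop μ * dop ν)
              + matOp (γ μ * γ ν) (dop ν * dop μ))) := by
          rw [Finset.smul_sum, Finset.smul_sum, ← Finset.sum_add_distrib]
          refine Finset.sum_congr rfl fun μ _ => ?_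
          rw [Finset.smul_sum, Finset.smul_sum, ← Finset.sum_add_distrib]
          exact Finset.sum_congr rfl fun ν _ => hsplit μ ν
      _ = (1/2 : ℂ) • (∑ μ, ∑ ν, matOp (γ μ * γ ν) (F μ ν))
          + matOp (1 : Matrix (Fin k) (Fin k) ℂ) θ := by
          congr 1
          rw [hpair, hθ', Finset.smul_sum]
          refine Finset.sum_congr rfl fun μ _ => ?_
          rw [Finset.smul_sum]
          refine Finset.sum_congr rfl fun ν _ => ?_
          rw [smul_smul]
          congr 1
          ring
  rw [hDω, add_mul, mul_add, mul_add, hGG, hGC, hCG, hCC, hmain,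
    matOp_add_right]
  simp only [sub_eq_add_neg, matOp_add_right, matOp_neg_right]
  rw [Finset.sum_add_distrib]
  abel
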